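/- Let F be a number field. The set Red_F of reduced Arakelov divisors, i.e., divisors of the form d(I) = (I, N(I)^{−1/n}) with 1 a minimal element of the fractional ideal I, is finite. -/

import Mathlib

open NumberField Module FractionalIdeal
open scoped nonZeroDivisors

/-- Prop. 7.2(ii). The set of reduced Arakelov divisors is
finite: since a reduced divisor `d(I) = (I, N(I)^{-1/n})` is determined by its
fractional ideal `I`, this says that the set of fractional ideals `I`
containing `1` as a minimal element is finite. -/
theorem reduced_arakelov_divisors_finite (F : Type*) [Field F] [NumberField F] :
    {I : FractionalIdeal (𝓞 F)⁰ F |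
      (1 : F) ∈ I ∧
        ∀ g : F, g ∈ I → (∀ w : InfinitePlace F, w g < 1) → g = 0}.Finite := by
  classical
  set n := finrank ℝ (mixedEmbedding.mixedSpace F) with hn
  set V0 := MeasureTheory.volume
    (ZSpan.fundamentalDomain (mixedEmbedding.latticeBasis F)) with hV0
  set B := MeasureTheory.volume (mixedEmbedding.convexBodyLT F fun _ => 1) with hBdef
  have hBval : B = mixedEmbedding.convexBodyLTFactor F := by
    rw [hBdef, mixedEmbedding.convexBodyLT_volume]
    simp
  have hB0 : B ≠ 0 := by
    rw [hBval]
    exact_mod_cast mixedEmbedding.convexBodyLTFactor_ne_zero F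
  have hBtop : B ≠ ⊤ := by rw [hBval]; exact ENNReal.coe_ne_top
  have hV0ne : V0 ≠ 0 := ZSpan.measure_fundamentalDomain_ne_zero _
  have hV0top : V0 ≠ ⊤ :=
    (ZSpan.fundamentalDomain_isBounded _).measure_lt_top.ne
  -- the positive lower bound on the norm of ideals in the set
  set c : ENNReal := B / (V0 * 2 ^ n) with hc
  have hcne : c ≠ 0 := by
    rw [hc]
    exact ENNReal.div_ne_zero.mpr ⟨hB0, ENNReal.mul_ne_top hV0top (by simp)⟩
  have hctop : c ≠ ⊤ := by
    rw [hc]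
    exact (ENNReal.div_lt_top hBtop (by simp [hV0ne, ENNReal.pow_ne_zero])).ne
  set N : ℕ := ⌈(c.toReal)⁻¹⌉₊ with hN
  have hfin : ({J : Ideal (𝓞 F) | Ideal.absNorm J ≤ N}).Finite :=
    Ideal.finite_setOf_absNorm_le N
  refine Set.Finite.subset (hfin.image
    (fun J : Ideal (𝓞 F) => ((J : FractionalIdeal (𝓞 F)⁰ F))⁻¹)) ?_
  rintro I ⟨h1, hmin⟩
  have hI0 : I ≠ 0 := by
    intro h
    rw [h] at h1
    exact one_ne_zero ((FractionalIdeal.mem_zero_iff _).mp h1)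
  -- `I⁻¹` is an integral ideal
  have hle : I⁻¹ ≤ 1 := by
    have h1le : (1 : FractionalIdeal (𝓞 F)⁰ F) ≤ I := FractionalIdeal.one_le.mpr h1
    calc I⁻¹ = I⁻¹ * 1 := (mul_one _).symm
    _ ≤ I⁻¹ * I := mul_right_mono (a := I⁻¹) h1le
    _ = 1 := inv_mul_cancel₀ hI0
  obtain ⟨J, hJ⟩ := FractionalIdeal.le_one_iff_exists_coeIdeal.mp hle
  refine ⟨J, ?_, by show ((J : FractionalIdeal (𝓞 F)⁰ F))⁻¹ = I; rw [hJ, inv_inv]⟩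
  -- Minkowski: no small nonzero element forces `B ≤ minkowskiBound`
  set Iu : (FractionalIdeal (𝓞 F)⁰ F)ˣ := Units.mk0 I hI0 with hIu
  have hmink : B ≤ mixedEmbedding.minkowskiBound F Iu := by
    by_contra hlt
    push_neg at hlt
    obtain ⟨a, haI, ha0, haw⟩ :=
      mixedEmbedding.exists_ne_zero_mem_ideal_lt F Iu hlt
    exact ha0 (hmin a haI (by simpa using haw))
  -- extract the norm bound
  have hmb : mixedEmbedding.minkowskiBound F Iu
      = ENNReal.ofReal (FractionalIdeal.absNorm Iu.1) * (V0 * 2 ^ n) := by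
    rw [mixedEmbedding.minkowskiBound,
      mixedEmbedding.volume_fundamentalDomain_fractionalIdealLatticeBasis, hn, hV0, mul_assoc]
  have hcle : c ≤ ENNReal.ofReal (FractionalIdeal.absNorm Iu.1) := by
    rw [hc]
    rw [hmb] at hmink
    exact ENNReal.div_le_of_le_mul hmink
  have habs : (0:ℚ) < FractionalIdeal.absNorm I :=
    lt_of_le_of_ne (FractionalIdeal.absNorm_nonneg I)
      (fun h => hI0 (FractionalIdeal.absNorm_eq_zero_iff.mp h.symm))
  have hcr : c.toReal ≤ (FractionalIdeal.absNorm I : ℝ) := by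
    have := ENNReal.toReal_mono (by simp) hcle
    rwa [ENNReal.toReal_ofReal (by exact_mod_cast habs.le)] at this
  have hcpos : (0:ℝ) < c.toReal := ENNReal.toReal_pos hcne hctop
  -- conclude the bound on `Ideal.absNorm J`
  have hJnorm : (Ideal.absNorm J : ℚ) = (FractionalIdeal.absNorm I)⁻¹ := by
    rw [← FractionalIdeal.coeIdeal_absNorm (K := F), hJ, map_inv₀]
  have : (Ideal.absNorm J : ℝ) ≤ (c.toReal)⁻¹ := by
    have : ((Ideal.absNorm J : ℚ) : ℝ) = ((FractionalIdeal.absNorm I : ℝ))⁻¹ := by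
      rw [hJnorm]; push_cast; ring
    rw [show ((Ideal.absNorm J : ℕ) : ℝ) = ((Ideal.absNorm J : ℚ) : ℝ) by push_cast; ring, this]
    exact inv_anti₀ hcpos hcr
  have : (Ideal.absNorm J : ℝ) ≤ (N : ℝ) :=
    this.trans (Nat.le_ceil _)
  exact_mod_cast this
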